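/- Let C be a category and let D be a pullback-stable family of sieves on C. Define, for each object c, Dʳ(c) to be the set of sieves T on c such that for every arrow f : d ⟶ c and every sieve S on d, if S ∈ D(d) and S ≤ f*(T) then f ∈ T; and define (Dʳ)ˡ(c) to be the set of sieves S on c such that for every arrow f : d ⟶ c and every sieve Z on d, if Z ∈ Dʳ(d) and f*(S) ≤ Z then Z = ⊤. Then Dʳ is a pullback-stable family of sieves, (Dʳ)ˡ is a Grothendieck topology on C, and (Dʳ)ˡ is the smallest Grothendieck topology containing D: D(c) ⊆ (Dʳ)ˡ(c) for every object c, and for every Grothendieck topology K on C with D(c) ⊆ K(c) for all c, one has (Dʳ)ˡ(c) ⊆ K(c) for all c. -/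

import Mathlib

open CategoryTheory

/-- The right dual `Dʳ` of a family of sieves `D`:
`Dʳ(c) = {T | ∀ f : d ⟶ c, ∀ S ∈ D(d), S ≤ f*(T) → f ∈ T}`. -/
def rightDual {C : Type u} [Category.{v} C] (D : ∀ c : C, Set (Sieve c)) (c : C) :
    Set (Sieve c) :=
  {T | ∀ {d : C} (f : d ⟶ c) (S : Sieve d), S ∈ D d → S ≤ T.pullback f → T.arrows f}

/-- The left dual `Dˡ` of a family of sieves `D`:
`Dˡ(c) = {S | ∀ f : d ⟶ c, ∀ Z ∈ D(d), f*(S) ≤ Z → Z = ⊤}`. -/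
def leftDual {C : Type u} [Category.{v} C] (D : ∀ c : C, Set (Sieve c)) (c : C) :
    Set (Sieve c) :=
  {S | ∀ {d : C} (f : d ⟶ c) (Z : Sieve d), Z ∈ D d → S.pullback f ≤ Z → Z = ⊤}

/-- Given a pullback-stable family of sieves `D` on `C`, the family `Dʳ` is pullback-stable,
and `(Dʳ)ˡ` is a Grothendieck topology on `C`; moreover it is the smallest Grothendieck
topology containing `D`. -/
theorem rightDual_leftDual_is_generated_topology
    {C : Type u} [Category.{v} C] (D : ∀ c : C, Set (Sieve c))
    (hD : ∀ {c d : C} (f : d ⟶ c) (S : Sieve c), S ∈ D c → S.pullback f ∈ D d) :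
    (∀ {c d : C} (f : d ⟶ c) (T : Sieve c),
        T ∈ rightDual D c → T.pullback f ∈ rightDual D d) ∧
    ∃ K : GrothendieckTopology C,
      (∀ (c : C) (S : Sieve c), S ∈ K c ↔ S ∈ leftDual (rightDual D) c) ∧
      (∀ (c : C) (S : Sieve c), S ∈ D c → S ∈ K c) ∧
      (∀ K' : GrothendieckTopology C,
        (∀ (c : C) (S : Sieve c), S ∈ D c → S ∈ K' c) →
        ∀ (c : C) (S : Sieve c), S ∈ K c → S ∈ K' c) := by
  have stab : ∀ {c d : C} (f : d ⟶ c) (T : Sieve c),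
      T ∈ rightDual D c → T.pullback f ∈ rightDual D d := by
    intro c d f T hT e g S hS hle
    exact hT (g ≫ f) S hS (by rwa [Sieve.pullback_comp])
  refine ⟨stab, ?_⟩
  have top_mem : ∀ c : C, (⊤ : Sieve c) ∈ leftDual (rightDual D) c := by
    intro c d f Z hZ hle
    rw [Sieve.pullback_top] at hle
    exact le_antisymm le_top hle
  have pb : ∀ {c d : C} (f : d ⟶ c) (S : Sieve c),
      S ∈ leftDual (rightDual D) c → S.pullback f ∈ leftDual (rightDual D) d := by
    intro c d f S hS e g Z hZ hle
    exact hS (g ≫ f) Z hZ (by rwa [Sieve.pullback_comp])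
  have trans : ∀ {c : C} (S : Sieve c), S ∈ leftDual (rightDual D) c →
      ∀ (R : Sieve c), (∀ {d : C} (f : d ⟶ c), S.arrows f →
        R.pullback f ∈ leftDual (rightDual D) d) → R ∈ leftDual (rightDual D) c := by
    intro c S hS R hR d f Z hZ hle
    refine hS f Z hZ ?_
    intro e g hg
    have h1 : R.pullback (g ≫ f) ∈ leftDual (rightDual D) e := hR (g ≫ f) hg
    have h2 : (R.pullback (g ≫ f)).pullback (𝟙 e) ≤ Z.pullback g := by
      rw [Sieve.pullback_id, Sieve.pullback_comp]
      exact Sieve.pullback_monotone g hle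
    have := h1 (𝟙 e) (Z.pullback g) (stab g Z hZ) h2
    exact (Sieve.mem_iff_pullback_eq_top g).2 this
  refine ⟨{ sieves := leftDual (rightDual D),
            top_mem' := top_mem,
            pullback_stable' := fun _ _ S f hS => pb f S hS,
            transitive' := fun _ _ hS R hR => trans _ hS R fun f hf => hR hf },
          fun c S => Iff.rfl, ?_, ?_⟩
  · intro c S hS d f Z hZ hle
    ext e g
    simp only [Sieve.top_apply, iff_true]
    refine hZ g ((S.pullback f).pullback g) ?_ (Sieve.pullback_monotone g hle)
    rw [← Sieve.pullback_comp]
    exact hD (g ≫ f) S hS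
  · intro K' hK' c S hS
    let Z : Sieve c :=
      { arrows := fun d f => S.pullback f ∈ K' d
        downward_closed := by
          intro d e f hf g
          rw [Sieve.pullback_comp]
          exact K'.pullback_stable g hf }
    have hZr : Z ∈ rightDual D c := by
      intro d g S' hS' hle
      refine K'.transitive (hK' d S' hS') (S.pullback g) ?_
      intro e h hh
      have := hle h hh
      rwa [← Sieve.pullback_comp]
    have hSZ : S ≤ Z := by
      intro d f hf
      show S.pullback f ∈ K' d
      rw [Sieve.pullback_eq_top_of_mem S hf]
      exact K'.top_mem d
    have hZtop : Z = ⊤ := hS (𝟙 c) Z hZr (by rwa [Sieve.pullback_id])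
    have : Z.arrows (𝟙 c) := by rw [hZtop]; trivial
    have : S.pullback (𝟙 c) ∈ K' c := this
    rwa [Sieve.pullback_id] at this
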